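/- Let G be a finite abelian group, Ω a finite set, and T : G → ℂ^{Ω×Ω} a family of permutation matrices with T_g·T_h = T_{gh} for all g, h. Let 𝒮 be a finite set of matrices in ℂ^{Ω×Ω} such that: (a) T_g·M ∈ 𝒮 for all g ∈ G and M ∈ 𝒮; (b) for all M, M' ∈ 𝒮 there is exactly one g ∈ G with T_g·M = M' (the action of G on 𝒮 is regular); (c) T_g·M = M·T_g for all g ∈ G and M ∈ 𝒮; and (d) some M₀ ∈ 𝒮 is symmetric (M₀ᵀ = M₀). Then there is a bijection S : G → 𝒮 with T_g·S_h = S_{gh} and (S_g)ᵀ = S_{g⁻¹} for all g, h ∈ G. (In a roux scheme, the thick relations can be labeled by the thin radical G so that T_g S_h = S_{gh} and S_gᵀ = S_{g⁻¹}.) -/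
import Mathlib


open scoped BigOperators
open Matrix

noncomputable section

/-- **Labeling the thick relations of a roux scheme**: if the thin radical `G`
acts regularly on the set `𝒮` of thick relation matrices, commutes with them,
and `𝒮` contains a symmetric matrix, then the matrices in `𝒮` can be labeled
`S_g` (`g ∈ G`) so that `T_g·S_h = S_{gh}` and `S_gᵀ = S_{g⁻¹}`. -/
theorem stmt9 {G : Type*} [CommGroup G] [Fintype G] [DecidableEq G]
    {Ω : Type*} [Fintype Ω] [DecidableEq Ω]
    (T : G → Matrix Ω Ω ℂ)
    (σ : G → Equiv.Perm Ω)
    (hσ : ∀ (g : G) (x y : Ω), T g x y = if σ g x = y then 1 else 0)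
    (hT : ∀ g h : G, T g * T h = T (g * h))
    (𝒮 : Finset (Matrix Ω Ω ℂ))
    (ha : ∀ g : G, ∀ M ∈ 𝒮, T g * M ∈ 𝒮)
    (hb : ∀ M ∈ 𝒮, ∀ M' ∈ 𝒮, ∃! g : G, T g * M = M')
    (hc : ∀ g : G, ∀ M ∈ 𝒮, T g * M = M * T g)
    (hd : ∃ M ∈ 𝒮, Mᵀ = M) :
    ∃ S : G → Matrix Ω Ω ℂ,
      (∀ g : G, S g ∈ 𝒮) ∧ Function.Injective S ∧ (∀ M ∈ 𝒮, ∃ g : G, S g = M) ∧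
        (∀ g h : G, T g * S h = S (g * h)) ∧ (∀ g : G, (S g)ᵀ = S g⁻¹) := by
  obtain ⟨M₀, hM₀, hM₀T⟩ := hd
  -- T g * (T g)ᵀ = 1
  have hTT : ∀ g : G, T g * (T g)ᵀ = 1 := by
    intro g
    ext x y
    simp only [mul_apply, transpose_apply, hσ, one_apply, ite_mul, one_mul, zero_mul,
      Finset.sum_ite_eq, Finset.mem_univ, if_true, EmbeddingLike.apply_eq_iff_eq]
    exact if_congr eq_comm rfl rfl
  have hT1 : T 1 = 1 := by
    have h1 : T 1 * T 1 = T 1 := by rw [hT]; simp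
    have h2 := congrArg (· * (T 1)ᵀ) h1
    simpa [mul_assoc, hTT] using h2
  have hTinv : ∀ g : G, (T g)ᵀ = T g⁻¹ := by
    intro g
    calc (T g)ᵀ = (T g⁻¹ * T g) * (T g)ᵀ := by rw [hT, inv_mul_cancel, hT1, one_mul]
    _ = T g⁻¹ * (T g * (T g)ᵀ) := by rw [mul_assoc]
    _ = T g⁻¹ := by rw [hTT, mul_one]
  refine ⟨fun g => T g * M₀, fun g => ha g M₀ hM₀, ?_, ?_, ?_, ?_⟩
  · intro g h hgh
    obtain ⟨k, _, huniq⟩ := hb M₀ hM₀ (T h * M₀) (ha h M₀ hM₀)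
    exact (huniq g hgh).trans (huniq h rfl).symm
  · intro M hM
    obtain ⟨g, hg, _⟩ := hb M₀ hM₀ M hM
    exact ⟨g, hg⟩
  · intro g h
    rw [← mul_assoc, hT]
  · intro g
    rw [transpose_mul, hM₀T, hTinv, ← hc g⁻¹ M₀ hM₀]

end
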